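/- Let f : [0,∞) → ℝ be superquadratic, μ a probability measure on a measure space Ω, and φ : Ω → [0,∞) a μ-integrable function (with f∘φ and f(|φ - m|) integrable, where m = ∫ φ dμ). Then f(∫_Ω φ dμ) ≤ ∫_Ω f(φ(t)) dμ(t) - ∫_Ω f(|φ(t) - ∫_Ω φ ds|) dμ(t). -/

import Mathlib

open MeasureTheory

theorem jensen_superquadratic {Ω : Type*} [MeasurableSpace Ω]
    (μ : Measure Ω) [IsProbabilityMeasure μ]
    (f : ℝ → ℝ)
    (hf : ∀ a : ℝ, 0 ≤ a → ∃ C : ℝ, ∀ b : ℝ, 0 ≤ b →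
      f b ≥ f a + C * (b - a) + f |b - a|)
    (φ : Ω → ℝ) (hφ_nonneg : ∀ t, 0 ≤ φ t)
    (hφ_int : Integrable φ μ)
    (hfφ_int : Integrable (fun t => f (φ t)) μ)
    (hfd_int : Integrable (fun t => f |φ t - ∫ s, φ s ∂μ|) μ) :
    f (∫ t, φ t ∂μ) ≤ (∫ t, f (φ t) ∂μ) - ∫ t, f |φ t - ∫ s, φ s ∂μ| ∂μ := by
  set m := ∫ t, φ t ∂μ with hm
  have hm_nonneg : 0 ≤ m := integral_nonneg hφ_nonneg
  obtain ⟨C, hC⟩ := hf m hm_nonneg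
  have hmono : (fun t => f m + C * (φ t - m) + f |φ t - m|) ≤ᵐ[μ]
      fun t => f (φ t) := Filter.Eventually.of_forall fun t => hC (φ t) (hφ_nonneg t)
  have h1 : Integrable (fun t => C * (φ t - m)) μ := by
    simpa using (hφ_int.sub (integrable_const m)).const_mul C
  have h2 : Integrable (fun t => f m + C * (φ t - m)) μ := by
    simpa using (integrable_const (f m)).add h1
  have hint : Integrable (fun t => f m + C * (φ t - m) + f |φ t - m|) μ := by
    exact h2.add hfd_int
  have := integral_mono_ae hint hfφ_int hmono
  have hsplit : ∫ t, (f m + C * (φ t - m) + f |φ t - m|) ∂μ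
      = f m + C * (m - m) + ∫ t, f |φ t - m| ∂μ := by
    rw [integral_add h2 hfd_int, integral_add (integrable_const (f m)) h1,
      integral_const, probReal_univ, one_smul,
      MeasureTheory.integral_const_mul, integral_sub hφ_int (integrable_const m),
      integral_const, probReal_univ, one_smul]
  rw [hsplit] at this
  simp only [sub_self, mul_zero, add_zero] at this
  linarith
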